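/- If φ is jointly convex, i.e. φ(λx₁+(1-λ)x₂, λy₁+(1-λ)y₂) ≤ λφ(x₁,y₁) + (1-λ)φ(x₂,y₂) for all λ ∈ [0,1], then the Sketch ★-metric φ̂_k is also jointly convex: φ̂_k(λp₁+(1-λ)p₂, λq₁+(1-λ)q₂) ≤ λφ̂_k(p₁,q₁) + (1-λ)φ̂_k(p₂,q₂). -/

import Mathlib

open Finset

/-- The projection of a distribution `p` on `Ω` onto the cells of a partition `ρ`. -/
noncomputable def proj {Ω : Type*} [Fintype Ω] [DecidableEq Ω]
    (ρ : Finpartition (univ : Finset Ω)) (p : Ω → ℝ) : Finset Ω → ℝ :=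
  fun a => if a ∈ ρ.parts then ∑ i ∈ a, p i else 0

lemma proj_comb {Ω : Type*} [Fintype Ω] [DecidableEq Ω]
    (ρ : Finpartition (univ : Finset Ω)) (p₁ p₂ : Ω → ℝ) (l : ℝ) :
    proj ρ (fun i => l * p₁ i + (1 - l) * p₂ i) =
      fun a => l * proj ρ p₁ a + (1 - l) * proj ρ p₂ a := by
  funext a
  simp only [proj]
  split <;> simp [Finset.sum_add_distrib, Finset.mul_sum]

/-- Joint convexity is preserved by the Sketch ★-metric. -/
theorem sketch_star_metric_convex {Ω : Type*} [Fintype Ω] [DecidableEq Ω] (k : ℕ)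
    (hk : 1 ≤ k) (hcard : k ≤ Fintype.card Ω)
    (φ : (Finset Ω → ℝ) → (Finset Ω → ℝ) → ℝ)
    (hφ : ∀ (x₁ x₂ y₁ y₂ : Finset Ω → ℝ) (l : ℝ), 0 ≤ l → l ≤ 1 →
      φ (fun a => l * x₁ a + (1 - l) * x₂ a) (fun a => l * y₁ a + (1 - l) * y₂ a) ≤
        l * φ x₁ y₁ + (1 - l) * φ x₂ y₂)
    (p₁ p₂ q₁ q₂ : Ω → ℝ)
    (hp₁0 : ∀ i, 0 ≤ p₁ i) (hp₁1 : ∑ i, p₁ i = 1)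
    (hp₂0 : ∀ i, 0 ≤ p₂ i) (hp₂1 : ∑ i, p₂ i = 1)
    (hq₁0 : ∀ i, 0 ≤ q₁ i) (hq₁1 : ∑ i, q₁ i = 1)
    (hq₂0 : ∀ i, 0 ≤ q₂ i) (hq₂1 : ∑ i, q₂ i = 1)
    (l : ℝ) (hl0 : 0 ≤ l) (hl1 : l ≤ 1)
    (P : Finset (Finpartition (univ : Finset Ω)))
    (hP : ∀ ρ, ρ ∈ P ↔ ρ.parts.card = k) (hne : P.Nonempty) :
    P.sup' hne (fun ρ =>
        φ (proj ρ (fun i => l * p₁ i + (1 - l) * p₂ i))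
          (proj ρ (fun i => l * q₁ i + (1 - l) * q₂ i))) ≤
      l * P.sup' hne (fun ρ => φ (proj ρ p₁) (proj ρ q₁)) +
      (1 - l) * P.sup' hne (fun ρ => φ (proj ρ p₂) (proj ρ q₂)) := by
  apply Finset.sup'_le
  intro ρ hρ
  rw [proj_comb, proj_comb]
  calc φ (fun a => l * proj ρ p₁ a + (1 - l) * proj ρ p₂ a)
        (fun a => l * proj ρ q₁ a + (1 - l) * proj ρ q₂ a)
      ≤ l * φ (proj ρ p₁) (proj ρ q₁) + (1 - l) * φ (proj ρ p₂) (proj ρ q₂) :=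
        hφ _ _ _ _ l hl0 hl1
    _ ≤ _ := by
        gcongr
        · exact Finset.le_sup' (fun ρ => φ (proj ρ p₁) (proj ρ q₁)) hρ
        · exact Finset.le_sup' (fun ρ => φ (proj ρ p₂) (proj ρ q₂)) hρ
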